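/- arXiv:2412.03613 — 3 statements merged into one kernel-verified Lean document; each statement's English description precedes it below -/
import Mathlib

section
/- Let K : D → L(H) be an analytic family of compact operators on a separable Hilbert space H, defined on an open connected subset D of ℂ. Then either (I − K(z)) is invertible for no z in D, or there is a discrete subset S of D such that (I − K(z))⁻¹ exists for all z in D \ S and for each z in S the equation K(z)v = v has a nonzero solution v in H. -/
open Metric Set

/-- finite rank approximation of a compact operator in Hilbert space -/
lemma approx_finrank {H : Type*} [NormedAddCommGroup H] [InnerProductSpace ℂ H]
    [CompleteSpace H] (f : H →L[ℂ] H) (hf : IsCompactOperator f) {ε : ℝ} (hε : 0 < ε) :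
    ∃ (V : Submodule ℂ H) (F : H →L[ℂ] H), FiniteDimensional ℂ V ∧ (∀ x, F x ∈ V) ∧
      ‖f - F‖ < ε := by
  obtain ⟨t, ht, himg⟩ := hf.image_ball_subset_compact (f := (f : H →ₗ[ℂ] H)) 1
  obtain ⟨c, hcfin, hcover⟩ := (Metric.totallyBounded_iff).1 ht.totallyBounded (ε/4)
    (by linarith)
  set V : Submodule ℂ H := Submodule.span ℂ c with hV
  have hVfd : FiniteDimensional ℂ V := FiniteDimensional.span_of_finite ℂ hcfin
  have : CompleteSpace V := FiniteDimensional.complete ℂ V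
  set P : H →L[ℂ] H := V.subtypeL.comp (Submodule.orthogonalProjectionOnto V) with hP
  refine ⟨V, P.comp f, hVfd, fun x => (Submodule.orthogonalProjectionOnto V (f x)).2, ?_⟩
  have key : ∀ x ∈ Metric.ball (0:H) 1, ‖f x - P (f x)‖ ≤ ε/4 := by
    intro x hx
    have hfx : f x ∈ t := himg ⟨x, hx, by simp⟩
    obtain ⟨y, hy, hxy⟩ := Set.mem_iUnion₂.1 (hcover hfx)
    have hyV : y ∈ V := Submodule.subset_span hy
    have hmin : ‖f x - P (f x)‖ = ⨅ w : V, ‖f x - w‖ := Submodule.starProjection_minimal (f x)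
    rw [hmin]
    have : (⨅ w : V, ‖f x - w‖) ≤ ‖f x - (⟨y, hyV⟩ : V)‖ :=
      ciInf_le ⟨0, fun a ⟨w, hw⟩ => hw ▸ norm_nonneg _⟩ _
    exact this.trans (le_of_lt (by simpa [dist_eq_norm] using hxy))
  have hb : ∀ x : H, ‖(f - P.comp f) x‖ ≤ (ε/2) * ‖x‖ := by
    intro x
    rcases eq_or_ne x 0 with rfl | hx
    · simp
    · have hnx : (0:ℝ) < ‖x‖ := norm_pos_iff.2 hx
      set y : H := (2 * ‖x‖ : ℝ)⁻¹ • x with hy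
      have hyb : y ∈ Metric.ball (0:H) 1 := by
        simp only [mem_ball, dist_zero_right, hy, norm_smul, norm_inv]
        rw [Real.norm_eq_abs, abs_of_pos (by linarith)]
        rw [inv_mul_lt_iff₀ (by linarith)]
        linarith
      have hxy : x = (2 * ‖x‖ : ℝ) • y := by
        rw [hy, smul_smul, mul_inv_cancel₀ (by positivity), one_smul]
      have := key y hyb
      calc ‖(f - P.comp f) x‖ = ‖(f - P.comp f) ((2 * ‖x‖ : ℝ) • y)‖ := by rw [← hxy]
        _ = ‖(2 * ‖x‖ : ℝ) • ((f - P.comp f) y)‖ := by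
            rw [(f - P.comp f).map_smul_of_tower]
        _ = (2 * ‖x‖) * ‖(f - P.comp f) y‖ := by
            rw [norm_smul, Real.norm_eq_abs, abs_of_pos (by linarith)]
        _ ≤ (2 * ‖x‖) * (ε/4) := by
            apply mul_le_mul_of_nonneg_left _ (by linarith)
            simpa using this
        _ = (ε/2) * ‖x‖ := by ring
  have : ‖f - P.comp f‖ ≤ ε/2 := ContinuousLinearMap.opNorm_le_bound _ (by linarith) hb
  linarith
section B
variable {H : Type*} [NormedAddCommGroup H] [InnerProductSpace ℂ H] [CompleteSpace H]

/-- the restriction of `1 - G` to `V`, when `G` has range in `V` -/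
noncomputable def gres (V : Submodule ℂ H) (G : H →L[ℂ] H) (hG : ∀ x, G x ∈ V) :
    V →ₗ[ℂ] V :=
  ((1 : H →ₗ[ℂ] H) - (G : H →ₗ[ℂ] H)).restrict
    (fun x hx => by simpa using V.sub_mem hx (hG x))

lemma gres_apply (V : Submodule ℂ H) (G : H →L[ℂ] H) (hG : ∀ x, G x ∈ V) (v : V) :
    (gres V G hG v : H) = (v : H) - G v := rfl

lemma oneSub_apply (G : H →L[ℂ] H) (x : H) : ((1 : H →L[ℂ] H) - G) x = x - G x := rfl

variable (V : Submodule ℂ H) (G : H →L[ℂ] H) (hG : ∀ x, G x ∈ V)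

lemma ker_oneSub (hinj : Function.Injective (gres V G hG)) :
    ∀ z : H, z - G z = 0 → z = 0 := by
  intro z hz
  have hzV : z ∈ V := by
    have hzg : z = G z := by rwa [sub_eq_zero] at hz
    rw [hzg]; exact hG z
  have h0 : gres V G hG ⟨z, hzV⟩ = 0 := by
    apply Subtype.ext; simpa [gres_apply] using hz
  have := hinj (a₁ := ⟨z, hzV⟩) (a₂ := 0) (by simpa using h0)
  simpa using congrArg Subtype.val this

lemma isUnit_oneSub_of_bijective [FiniteDimensional ℂ V]
    (hbij : Function.Bijective (gres V G hG)) :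
    IsUnit ((1 : H →L[ℂ] H) - G) := by
  set e : V ≃ₗ[ℂ] V := LinearEquiv.ofBijective _ hbij with he
  set Binv : H →L[ℂ] H :=
    1 + V.subtypeL.comp ((LinearMap.toContinuousLinearMap (e.symm : V →ₗ[ℂ] V)).comp
      (G.codRestrict V hG)) with hB
  have hBapp : ∀ y : H, Binv y = y + ((e.symm ⟨G y, hG y⟩ : V) : H) := fun y => rfl
  have hkey : ∀ y : H, ((e.symm ⟨G y, hG y⟩ : V) : H) - G (e.symm ⟨G y, hG y⟩ : V) = G y := by
    intro y
    have h1 : gres V G hG (e.symm ⟨G y, hG y⟩) = ⟨G y, hG y⟩ := by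
      have := e.apply_symm_apply ⟨G y, hG y⟩
      rwa [he, LinearEquiv.ofBijective_apply] at this
    have := congrArg Subtype.val h1
    simpa [gres_apply] using this
  have hprod : ∀ y : H, ((1 : H →L[ℂ] H) - G) (Binv y) = y := by
    intro y
    set u : H := ((e.symm ⟨G y, hG y⟩ : V) : H) with hu
    rw [oneSub_apply, hBapp y, map_add]
    have h4 : y + u - (G y + G u) = y + ((u - G u) - G y) := by abel
    rw [h4, hkey y]
    simp
  have hright : ((1 : H →L[ℂ] H) - G) * Binv = 1 := by
    ext y
    simpa [ContinuousLinearMap.mul_apply] using hprod y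
  have hker := ker_oneSub V G hG hbij.injective
  have hleft : Binv * ((1 : H →L[ℂ] H) - G) = 1 := by
    ext x
    set a : H := Binv (((1 : H →L[ℂ] H) - G) x) with ha
    have h1 : a - G a = x - G x := by
      have := hprod (((1 : H →L[ℂ] H) - G) x)
      rw [oneSub_apply] at this
      rw [this, oneSub_apply]
    have h2 : a - x = 0 := by
      apply hker
      rw [map_sub]
      have h4 : a - x - (G a - G x) = a - G a - (x - G x) := by abel
      rw [h4, h1, sub_self]
    simp only [ContinuousLinearMap.mul_apply, ContinuousLinearMap.one_apply]
    rw [← ha, ← sub_eq_zero]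
    exact h2
  exact ⟨⟨_, Binv, hright, hleft⟩, rfl⟩

lemma injective_gres_of_isUnit (h : IsUnit ((1 : H →L[ℂ] H) - G)) :
    Function.Injective (gres V G hG) := by
  obtain ⟨u, hu⟩ := h
  have hinj : Function.Injective ((1 : H →L[ℂ] H) - G) := by
    intro x y hxy
    have : (↑u⁻¹ : H →L[ℂ] H) (((1 : H →L[ℂ] H) - G) x) =
        (↑u⁻¹ : H →L[ℂ] H) (((1 : H →L[ℂ] H) - G) y) := by rw [hxy]
    rwa [← hu, ← ContinuousLinearMap.mul_apply, ← ContinuousLinearMap.mul_apply,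
      u.inv_mul, ContinuousLinearMap.one_apply, ContinuousLinearMap.one_apply] at this
  intro v w hvw
  apply Subtype.ext
  apply hinj
  have := congrArg Subtype.val hvw
  simpa [gres_apply, oneSub_apply] using this

lemma isUnit_oneSub_iff_det [FiniteDimensional ℂ V] :
    IsUnit ((1 : H →L[ℂ] H) - G) ↔ LinearMap.det (gres V G hG) ≠ 0 := by
  constructor
  · intro h
    have hinj := injective_gres_of_isUnit V G hG h
    have hbij : Function.Bijective (gres V G hG) :=
      ⟨hinj, (LinearMap.injective_iff_surjective).1 hinj⟩
    have := (LinearEquiv.ofBijective _ hbij).isUnit_det'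
    exact this.ne_zero
  · intro hd
    classical
    set b := Module.finBasis ℂ V with hb
    have hM : IsUnit (LinearMap.toMatrix b b (gres V G hG)).det := by
      rw [LinearMap.det_toMatrix]; exact isUnit_iff_ne_zero.2 hd
    have hcoe := LinearEquiv.coe_ofIsUnitDet hM
    have hbij := (LinearEquiv.ofIsUnitDet hM).bijective
    rw [show ⇑(LinearEquiv.ofIsUnitDet hM) = ⇑(gres V G hG) from by
      rw [← LinearEquiv.coe_coe, hcoe]] at hbij
    exact isUnit_oneSub_of_bijective V G hG hbij

lemma exists_kernel_of_det_eq_zero [FiniteDimensional ℂ V]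
    (hd : LinearMap.det (gres V G hG) = 0) :
    ∃ v : H, v ≠ 0 ∧ ((1 : H →L[ℂ] H) - G) v = 0 := by
  have hlt := LinearMap.bot_lt_ker_of_det_eq_zero hd
  obtain ⟨v, hvker, hv0⟩ := SetLike.exists_of_lt hlt
  refine ⟨(v : H), ?_, ?_⟩
  · intro h
    exact hv0 (by simpa [Submodule.mem_bot] using Subtype.ext h)
  · have : gres V G hG v = 0 := hvker
    have := congrArg Subtype.val this
    simpa [gres_apply, oneSub_apply] using this

end B

section C
variable {H : Type*} [NormedAddCommGroup H] [InnerProductSpace ℂ H] [CompleteSpace H]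

lemma local_data (D : Set ℂ) (hD : IsOpen D)
    (K : ℂ → H →L[ℂ] H) (hK : DifferentiableOn ℂ K D)
    {z₀ : ℂ} (hz₀ : z₀ ∈ D) (hcpt : IsCompactOperator (K z₀)) :
    ∃ r > 0, Metric.ball z₀ r ⊆ D ∧ ∃ d : ℂ → ℂ,
      DifferentiableOn ℂ d (Metric.ball z₀ r) ∧
      (∀ z ∈ Metric.ball z₀ r, (IsUnit ((1 : H →L[ℂ] H) - K z) ↔ d z ≠ 0)) ∧
      (∀ z ∈ Metric.ball z₀ r, d z = 0 → ∃ v : H, v ≠ 0 ∧ K z v = v) := by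
  classical
  obtain ⟨V, F, hVfd, hFV, hFn⟩ := approx_finrank (K z₀) hcpt (by norm_num : (0:ℝ) < 1/2)
  haveI := hVfd
  haveI : CompleteSpace V := FiniteDimensional.complete ℂ V
  -- choose a ball where ‖K z - K z₀‖ < 1/2
  have hcont : ContinuousAt K z₀ :=
    (hK.continuousOn z₀ hz₀).continuousAt (hD.mem_nhds hz₀)
  have hev1 : ∀ᶠ z in nhds z₀, K z ∈ Metric.ball (K z₀) (1/2) :=
    hcont (Metric.ball_mem_nhds _ (by norm_num))
  have hev : ∀ᶠ z in nhds z₀, K z ∈ Metric.ball (K z₀) (1/2) ∧ z ∈ D :=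
    hev1.and (hD.mem_nhds hz₀)
  obtain ⟨r, hr, hball⟩ := Metric.eventually_nhds_iff_ball.1 hev
  have hsubD : Metric.ball z₀ r ⊆ D := fun z hz => (hball z hz).2
  -- the operators
  have hTn : ∀ z ∈ Metric.ball z₀ r, ‖K z - F‖ < 1 := by
    intro z hz
    have h1 : ‖K z - K z₀‖ < 1/2 := by
      have := (hball z hz).1
      rwa [Metric.mem_ball, dist_eq_norm] at this
    calc ‖K z - F‖ = ‖(K z - K z₀) + (K z₀ - F)‖ := by abel_nf
      _ ≤ ‖K z - K z₀‖ + ‖K z₀ - F‖ := norm_add_le _ _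
      _ < 1/2 + 1/2 := by exact add_lt_add h1 hFn
      _ = 1 := by norm_num
  have hTu : ∀ z ∈ Metric.ball z₀ r, IsUnit ((1 : H →L[ℂ] H) - (K z - F)) := by
    intro z hz
    have := (Units.oneSub (K z - F) (hTn z hz)).isUnit
    simpa using this
  set R : ℂ → H →L[ℂ] H := fun z => Ring.inverse ((1 : H →L[ℂ] H) - (K z - F)) with hR
  set G : ℂ → H →L[ℂ] H := fun z => F * R z with hG
  have hGV : ∀ z, ∀ x, G z x ∈ V := by
    intro z x
    rw [hG]
    exact hFV _
  -- the determinant function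
  set n := Module.finrank ℂ V with hn
  set b : Module.Basis (Fin n) ℂ V := Module.finBasis ℂ V with hb
  set ℓ : Fin n → H →L[ℂ] ℂ := fun i =>
    (LinearMap.toContinuousLinearMap (b.coord i)).comp (Submodule.orthogonalProjectionOnto V) with hℓ
  set m : ℂ → Matrix (Fin n) (Fin n) ℂ :=
    fun z => Matrix.of fun i j => ℓ i ((b j : H) - G z (b j)) with hm
  set d : ℂ → ℂ := fun z => (m z).det with hd
  -- entries agree with toMatrix of gres
  have hℓV : ∀ (i : Fin n) (w : V), ℓ i (w : H) = b.repr w i := by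
    intro i w
    simp [hℓ, Submodule.orthogonalProjectionOnto_mem_subspace_eq_self, Module.Basis.coord_apply]
  have hmat : ∀ z, LinearMap.toMatrix b b (gres V (G z) (hGV z)) = m z := by
    intro z
    ext i j
    rw [LinearMap.toMatrix_apply, ← hℓV i (gres V (G z) (hGV z) (b j)), gres_apply]
    rfl
  have hdet : ∀ z, d z = LinearMap.det (gres V (G z) (hGV z)) := by
    intro z
    show (m z).det = _
    rw [← hmat z, LinearMap.det_toMatrix]
  -- factorization
  have hfact : ∀ z ∈ Metric.ball z₀ r,
      (1 : H →L[ℂ] H) - K z = (1 - G z) * ((1 : H →L[ℂ] H) - (K z - F)) := by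
    intro z hz
    have h1 : R z * ((1 : H →L[ℂ] H) - (K z - F)) = 1 :=
      Ring.inverse_mul_cancel _ (hTu z hz)
    have h2 : ((1 : H →L[ℂ] H) - G z) * ((1 : H →L[ℂ] H) - (K z - F)) =
        ((1 : H →L[ℂ] H) - (K z - F)) - F * (R z * ((1 : H →L[ℂ] H) - (K z - F))) := by
      rw [hG, sub_mul, one_mul, mul_assoc]
    rw [h2, h1, mul_one]
    abel
  -- the iff
  have hiff : ∀ z ∈ Metric.ball z₀ r, (IsUnit ((1 : H →L[ℂ] H) - K z) ↔ d z ≠ 0) := by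
    intro z hz
    rw [hdet z, ← isUnit_oneSub_iff_det V (G z) (hGV z)]
    rw [hfact z hz]
    have : ((1 : H →L[ℂ] H) - (K z - F)) = ↑(Units.oneSub (K z - F) (hTn z hz)) := rfl
    rw [this]
    exact Units.isUnit_mul_units _ _
  -- kernel vectors
  have hkerv : ∀ z ∈ Metric.ball z₀ r, d z = 0 → ∃ v : H, v ≠ 0 ∧ K z v = v := by
    intro z hz hdz
    rw [hdet z] at hdz
    obtain ⟨w, hw0, hw⟩ := exists_kernel_of_det_eq_zero V (G z) (hGV z) hdz
    refine ⟨R z w, ?_, ?_⟩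
    · intro hv
      apply hw0
      have h3 : ((1 : H →L[ℂ] H) - (K z - F)) * R z = 1 :=
        Ring.mul_inverse_cancel _ (hTu z hz)
      have h6 : w = ((1 : H →L[ℂ] H) - (K z - F)) (R z w) := by
        rw [← ContinuousLinearMap.mul_apply, h3, ContinuousLinearMap.one_apply]
      rw [hv, map_zero] at h6
      exact h6
    · have h4 : ((1 : H →L[ℂ] H) - K z) (R z w) = 0 := by
        rw [hfact z hz, ContinuousLinearMap.mul_apply]
        have h5 : ((1 : H →L[ℂ] H) - (K z - F)) (R z w) = w := by
          have h3 : ((1 : H →L[ℂ] H) - (K z - F)) * R z = 1 :=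
            Ring.mul_inverse_cancel _ (hTu z hz)
          rw [← ContinuousLinearMap.mul_apply, h3, ContinuousLinearMap.one_apply]
        rw [h5, hw]
      rw [oneSub_apply, sub_eq_zero] at h4
      exact h4.symm
  -- differentiability
  have hdiff : DifferentiableOn ℂ d (Metric.ball z₀ r) := by
    have hKz : ∀ z ∈ Metric.ball z₀ r, DifferentiableAt ℂ K z := fun z hz =>
      hK.differentiableAt (hD.mem_nhds (hsubD hz))
    have hRz : ∀ z ∈ Metric.ball z₀ r, DifferentiableAt ℂ R z := by
      intro z hz
      exact DifferentiableAt.inverse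
        ((differentiableAt_const _).sub ((hKz z hz).sub (differentiableAt_const _)))
        (hTu z hz)
    have hGz : ∀ z ∈ Metric.ball z₀ r, DifferentiableAt ℂ G z := fun z hz =>
      (differentiableAt_const F).mul (hRz z hz)
    have hmz : ∀ i j, ∀ z ∈ Metric.ball z₀ r, DifferentiableAt ℂ (fun z => m z i j) z := by
      intro i j z hz
      have h1 : DifferentiableAt ℂ (fun z => G z (b j)) z :=
        ((ContinuousLinearMap.apply ℂ H ((b j : H))).differentiable.differentiableAt).comp z
          (hGz z hz)
      exact ((ℓ i).differentiable.differentiableAt).comp z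
        ((differentiableAt_const _).sub h1)
    intro z hz
    apply DifferentiableAt.differentiableWithinAt
    have heq : (fun z => (m z).det) =
        fun z => ∑ σ : Equiv.Perm (Fin n), ((Equiv.Perm.sign σ : ℤ) : ℂ) *
          ∏ i, m z (σ i) i := by
      funext z
      rw [Matrix.det_apply]
      refine Finset.sum_congr rfl (fun σ _ => ?_)
      simp [Units.smul_def, zsmul_eq_mul]
    show DifferentiableAt ℂ (fun z => (m z).det) z
    rw [heq]
    apply DifferentiableAt.fun_sum
    intro σ _
    exact (DifferentiableAt.fun_finsetProd (fun i _ => hmz (σ i) i z hz)).const_mul _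
  exact ⟨r, hr, hsubD, d, hdiff, hiff, hkerv⟩

end C

/-- Analytic Fredholm theorem: for an analytic family `K : D → L(H)` of compact
operators on a separable complex Hilbert space, either `I - K(z)` is invertible for
no `z ∈ D`, or there is a subset `S ⊆ D`, discrete in `D`, such that `I - K(z)` is
invertible for all `z ∈ D \ S` and `K(z)v = v` has a nonzero solution for `z ∈ S`. -/
theorem stmt2 {H : Type*} [NormedAddCommGroup H] [InnerProductSpace ℂ H]
    [CompleteSpace H] [TopologicalSpace.SeparableSpace H]
    (D : Set ℂ) (hD : IsOpen D) (hDconn : IsConnected D)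
    (K : ℂ → H →L[ℂ] H) (hK : DifferentiableOn ℂ K D)
    (hcpt : ∀ z ∈ D, IsCompactOperator (K z)) :
    (∀ z ∈ D, ¬ IsUnit ((1 : H →L[ℂ] H) - K z)) ∨
    (∃ S ⊆ D, (∀ z ∈ D, ¬ AccPt z (Filter.principal S)) ∧
      (∀ z ∈ D \ S, IsUnit ((1 : H →L[ℂ] H) - K z)) ∧
      (∀ z ∈ S, ∃ v : H, v ≠ 0 ∧ K z v = v)) := by
  classical
  have hker : ∀ z ∈ D, ¬ IsUnit ((1 : H →L[ℂ] H) - K z) → ∃ v : H, v ≠ 0 ∧ K z v = v := by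
    intro z hz hnu
    obtain ⟨r, hr, hsub, d, hdiff, hiff, hkerv⟩ := local_data D hD K hK hz (hcpt z hz)
    have hzball : z ∈ Metric.ball z r := Metric.mem_ball_self hr
    have hdz : d z = 0 := by
      by_contra h
      exact hnu ((hiff z hzball).2 h)
    exact hkerv z hzball hdz
  have hdich : ∀ z ∈ D, (∀ᶠ w in nhds z, w ∈ D ∧ ¬ IsUnit ((1 : H →L[ℂ] H) - K w)) ∨
      (∀ᶠ w in nhdsWithin z {z}ᶜ, IsUnit ((1 : H →L[ℂ] H) - K w)) := by
    intro z hz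
    obtain ⟨r, hr, hsub, d, hdiff, hiff, hkerv⟩ := local_data D hD K hK hz (hcpt z hz)
    have hball_mem : Metric.ball z r ∈ nhds z := Metric.ball_mem_nhds z hr
    have han : AnalyticAt ℂ d z := hdiff.analyticAt hball_mem
    rcases han.eventually_eq_zero_or_eventually_ne_zero with h0 | h1
    · left
      filter_upwards [h0, hball_mem] with w hw hwb
      exact ⟨hsub hwb, fun hu => ((hiff w hwb).1 hu) hw⟩
    · right
      filter_upwards [h1, mem_nhdsWithin_of_mem_nhds hball_mem] with w hw hwb
      exact (hiff w hwb).2 hw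
  set S : Set ℂ := {z | z ∈ D ∧ ¬ IsUnit ((1 : H →L[ℂ] H) - K z)} with hS
  set A : Set ℂ := {z | ∃ U : Set ℂ, IsOpen U ∧ z ∈ U ∧ U ⊆ D ∧
      ∀ w ∈ U, ¬ IsUnit ((1 : H →L[ℂ] H) - K w)} with hA
  set W : Set ℂ := {z | ∃ U : Set ℂ, IsOpen U ∧ z ∈ U ∧ U ⊆ D ∧
      ∀ w ∈ U, ∀ᶠ y in nhdsWithin w {w}ᶜ, IsUnit ((1 : H →L[ℂ] H) - K y)} with hW
  have hAopen : IsOpen A := by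
    rw [isOpen_iff_forall_mem_open]
    rintro z ⟨U, hUo, hzU, hUD, hUnon⟩
    exact ⟨U, fun w hw => ⟨U, hUo, hw, hUD, hUnon⟩, hUo, hzU⟩
  have hWopen : IsOpen W := by
    rw [isOpen_iff_forall_mem_open]
    rintro z ⟨U, hUo, hzU, hUD, hUu⟩
    exact ⟨U, fun w hw => ⟨U, hUo, hw, hUD, hUu⟩, hUo, hzU⟩
  have hsubAW : D ⊆ A ∪ W := by
    intro z hz
    rcases hdich z hz with h0 | h1
    · left
      obtain ⟨U, hUsub, hUo, hzU⟩ := _root_.mem_nhds_iff.1 h0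
      exact ⟨U, hUo, hzU, fun w hw => (hUsub hw).1, fun w hw => (hUsub hw).2⟩
    · right
      have h1' := h1
      obtain ⟨U, hUo, hzU, hUsub⟩ := mem_nhdsWithin.1 h1'
      refine ⟨U ∩ D, hUo.inter hD, ⟨hzU, hz⟩, inter_subset_right, ?_⟩
      intro w hw
      rcases eq_or_ne w z with rfl | hwz
      · exact h1
      · have hopen : IsOpen (U ∩ {z}ᶜ) := hUo.inter isOpen_compl_singleton
        have hwmem : w ∈ U ∩ {z}ᶜ := ⟨hw.1, hwz⟩
        apply Filter.Eventually.filter_mono nhdsWithin_le_nhds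
        filter_upwards [hopen.mem_nhds hwmem] with y hy
        exact hUsub hy
  have hdisj : ∀ z, z ∈ A → z ∈ W → False := by
    rintro z ⟨U, hUo, hzU, hUD, hUnon⟩ ⟨U', hU'o, hzU', hU'D, hU'u⟩
    have h1 := hU'u z hzU'
    have h2 : ∀ᶠ y in nhdsWithin z {z}ᶜ, ¬ IsUnit ((1 : H →L[ℂ] H) - K y) :=
      Filter.Eventually.filter_mono nhdsWithin_le_nhds
        (Filter.eventually_of_mem (hUo.mem_nhds hzU) hUnon)
    have hfalse : ∀ᶠ y in nhdsWithin z {z}ᶜ, False := by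
      filter_upwards [h1, h2] with y a b
      exact b a
    obtain ⟨y, hy⟩ := hfalse.exists
    exact hy
  by_cases hDA : D ⊆ A
  · left
    intro z hz
    obtain ⟨U, _, hzU, _, hUnon⟩ := hDA hz
    exact hUnon z hzU
  · right
    have hDW : D ⊆ W := by
      rcases Set.eq_empty_or_nonempty (D ∩ A) with hempty | hne
      · intro z hz
        rcases hsubAW hz with h | h
        · exact absurd (Set.mem_inter hz h) (by rw [hempty]; exact notMem_empty z)
        · exact h
      · exfalso
        obtain ⟨z₁, hz₁D⟩ := Set.not_subset.1 hDA
        have hz₁W : z₁ ∈ W := by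
          rcases hsubAW hz₁D.1 with h | h
          · exact absurd h hz₁D.2
          · exact h
        obtain ⟨z₂, hz₂⟩ := hDconn.isPreconnected A W hAopen hWopen hsubAW hne
          ⟨z₁, hz₁D.1, hz₁W⟩
        exact hdisj z₂ hz₂.2.1 hz₂.2.2
    refine ⟨S, fun z hz => hz.1, ?_, ?_, ?_⟩
    · intro z hz
      obtain ⟨U, hUo, hzU, hUD, hUu⟩ := hDW hz
      have h1 := hUu z hzU
      rw [eventually_nhdsWithin_iff] at h1
      rw [accPt_iff_frequently]
      rw [Filter.not_frequently]
      filter_upwards [h1] with y hy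
      rintro ⟨hne, hyS⟩
      exact hyS.2 (hy hne)
    · intro z hz
      by_contra hnu
      exact hz.2 ⟨hz.1, hnu⟩
    · intro z hz
      exact hker z hz.1 hz.2
end

section
/- Let S ∈ C²(ℝ) with S' and S'' bounded, W ∈ W^{1,1}(ℝ), and v̄ measurable with W ⋆ v̄ defined a.e. Then the map F̃ : L²(ℝ) → L²(ℝ), F̃(v) = S(W ⋆ (v̄+v)) − S(W ⋆ v̄), is Fréchet differentiable at every v ∈ L², with derivative dF̃(v)·h = S'(W ⋆ (v̄+v)) · (W ⋆ h), and the remainder satisfies ‖F̃(v+h) − F̃(v) − dF̃(v)·h‖₂ ≤ (C/2) ‖S''‖_∞ ‖W‖²_{W^{1,1}} ‖h‖₂² for a constant C depending only on the Banach algebra constant of H¹(ℝ). -/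
open MeasureTheory

section Aux


lemma stmt7_supW {W W' : ℝ → ℝ} (hW : Integrable W (volume : Measure ℝ))
    (hW' : Integrable W' (volume : Measure ℝ))
    (hWd : ∀ x, HasDerivAt W (W' x) x) (x : ℝ) : |W x| ≤ ∫ y, |W' y| := by
  by_contra hc
  push_neg at hc
  set B := ∫ y, |W' y| with hBdef
  set ε := |W x| - B with hεdef
  have hε : 0 < ε := sub_pos.2 hc
  have key : ∀ z, ε ≤ |W z| := by
    intro z
    have hFTC : ∫ t in x..z, W' t = W z - W x :=
      intervalIntegral.integral_eq_sub_of_hasDerivAt (fun t _ => hWd t)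
        (hW'.intervalIntegrable)
    have h1 : |W z - W x| ≤ B := by
      rw [← hFTC]
      calc |∫ t in x..z, W' t| ≤ ∫ t in Set.uIoc x z, |W' t| :=
            by simpa [Real.norm_eq_abs] using
              intervalIntegral.norm_integral_le_integral_norm_uIoc (a := x) (b := z) (f := W') (μ := volume)
        _ ≤ B := setIntegral_le_integral hW'.abs
            (Filter.Eventually.of_forall fun t => abs_nonneg _)
    have := abs_sub_abs_le_abs_sub (W x) (W z)
    have h2 : |W x| - B ≤ |W z| := by
      have : |W x - W z| ≤ B := by rwa [abs_sub_comm] at h1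
      linarith [abs_sub_abs_le_abs_sub (W x) (W z)]
    exact h2
  have hfin := hW.hasFiniteIntegral
  rw [HasFiniteIntegral] at hfin
  have hbig : (∫⁻ z, ENNReal.ofReal ε ∂(volume : Measure ℝ)) ≤ ∫⁻ z, ‖W z‖₊ ∂volume := by
    refine lintegral_mono fun z => ?_
    rw [← enorm_eq_nnnorm, ← ofReal_norm]
    exact ENNReal.ofReal_le_ofReal ((key z).trans_eq (Real.norm_eq_abs _).symm)
  rw [lintegral_const, Real.volume_univ, ENNReal.mul_top
    (by simp [ENNReal.ofReal_eq_zero, not_le, hε])] at hbig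
  exact absurd (lt_of_le_of_lt hbig hfin) (by simp)


lemma stmt7_conv_sm {W g : ℝ → ℝ} (hWc : Continuous W) (hg : Measurable g) :
    StronglyMeasurable fun x => ∫ y, W (x - y) * g y := by
  apply MeasureTheory.StronglyMeasurable.integral_prod_right (f := fun x y => W (x - y) * g y)
  exact ((hWc.measurable.comp (measurable_fst.sub measurable_snd)).mul
    (hg.comp measurable_snd)).stronglyMeasurable

lemma stmt7_two_two : Real.HolderConjugate 2 2 := Real.HolderConjugate.two_two

lemma stmt7_conv_ptwise {W g : ℝ → ℝ} (hWc : Continuous W) (hg : Measurable g) (x : ℝ) :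
    (‖∫ y, W (x - y) * g y‖₊ : ENNReal)
      ≤ eLpNorm W 2 volume * eLpNorm g 2 volume := by
  calc (‖∫ y, W (x - y) * g y‖₊ : ENNReal)
      ≤ ∫⁻ y, ‖W (x - y) * g y‖₊ := enorm_integral_le_lintegral_enorm _
    _ = ∫⁻ y, ((fun y => (‖W (x - y)‖₊ : ENNReal)) * fun y => (‖g y‖₊ : ENNReal)) y := by
        simp [nnnorm_mul, ENNReal.coe_mul]
    _ ≤ (∫⁻ y, (‖W (x - y)‖₊ : ENNReal) ^ (2:ℝ)) ^ (1/(2:ℝ))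
        * (∫⁻ y, (‖g y‖₊ : ENNReal) ^ (2:ℝ)) ^ (1/(2:ℝ)) :=
        ENNReal.lintegral_mul_le_Lp_mul_Lq volume stmt7_two_two
          ((hWc.measurable.comp (measurable_const.sub measurable_id)).enorm.aemeasurable)
          (hg.enorm.aemeasurable)
    _ = eLpNorm W 2 volume * eLpNorm g 2 volume := by
        simp only [← enorm_eq_nnnorm]
        rw [(Measure.measurePreserving_sub_left volume x).lintegral_comp
            ((hWc.measurable.enorm).pow_const _),
          eLpNorm_eq_lintegral_rpow_enorm_toReal two_ne_zero ENNReal.ofNat_ne_top,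
          eLpNorm_eq_lintegral_rpow_enorm_toReal two_ne_zero ENNReal.ofNat_ne_top]
        norm_num

lemma stmt7_conv_young {W g : ℝ → ℝ} (hWc : Continuous W) (hg : Measurable g) :
    eLpNorm (fun x => ∫ y, W (x - y) * g y) 2 volume
      ≤ eLpNorm W 1 volume * eLpNorm g 2 volume := by
  have hhalf : ∀ a : ENNReal, a ^ ((1:ℝ)/2) * a ^ ((1:ℝ)/2) = a := fun a => by
    rw [← sq, ← ENNReal.rpow_natCast (a ^ ((1:ℝ)/2)) 2, ← ENNReal.rpow_mul]; norm_num
  have hsq : ∀ a : ENNReal, (a ^ ((1:ℝ)/2)) ^ (2:ℝ) = a := fun a => by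
    rw [← ENNReal.rpow_mul]; norm_num
  have hsqrt : ∀ a : ENNReal, (a * a) ^ ((1:ℝ)/2) = a := fun a => by
    rw [← sq, ← ENNReal.rpow_natCast a 2, ← ENNReal.rpow_mul]; norm_num
  set I1 : ENNReal := ∫⁻ z, (‖W z‖₊ : ENNReal) with hI1
  set E2 : ENNReal := ∫⁻ y, (‖g y‖₊ : ENNReal) ^ (2:ℝ) with hE2
  set J : ℝ → ENNReal := fun x => ∫⁻ y, (‖W (x - y)‖₊ : ENNReal) * (‖g y‖₊ : ENNReal) ^ (2:ℝ)
    with hJ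
  have hWm : Measurable W := hWc.measurable
  have step1 : ∀ x, (‖∫ y, W (x - y) * g y‖₊ : ENNReal) ^ (2:ℝ) ≤ I1 * J x := by
    intro x
    have hb : (‖∫ y, W (x - y) * g y‖₊ : ENNReal)
        ≤ I1 ^ (1/(2:ℝ)) * (J x) ^ (1/(2:ℝ)) := by
      calc (‖∫ y, W (x - y) * g y‖₊ : ENNReal)
          ≤ ∫⁻ y, ‖W (x - y) * g y‖₊ := enorm_integral_le_lintegral_enorm _
        _ = ∫⁻ y, ((fun y => (‖W (x - y)‖₊ : ENNReal) ^ (1/(2:ℝ)))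
              * fun y => (‖W (x - y)‖₊ : ENNReal) ^ (1/(2:ℝ)) * (‖g y‖₊ : ENNReal)) y := by
            refine lintegral_congr fun y => ?_
            simp only [Pi.mul_apply, nnnorm_mul, ENNReal.coe_mul]
            rw [← mul_assoc, hhalf]
        _ ≤ (∫⁻ y, ((‖W (x - y)‖₊ : ENNReal) ^ (1/(2:ℝ))) ^ (2:ℝ)) ^ (1/(2:ℝ))
            * (∫⁻ y, ((‖W (x - y)‖₊ : ENNReal) ^ (1/(2:ℝ)) * (‖g y‖₊ : ENNReal)) ^ (2:ℝ))
              ^ (1/(2:ℝ)) := by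
            refine ENNReal.lintegral_mul_le_Lp_mul_Lq volume stmt7_two_two ?_ ?_
            · exact (((hWm.comp (measurable_const.sub measurable_id)).enorm).pow_const
                _).aemeasurable
            · exact ((((hWm.comp (measurable_const.sub measurable_id)).enorm).pow_const
                _).mul hg.enorm).aemeasurable
        _ = I1 ^ (1/(2:ℝ)) * (J x) ^ (1/(2:ℝ)) := by
            congr 1
            · congr 1
              simp_rw [hsq]
              exact (Measure.measurePreserving_sub_left volume x).lintegral_comp hWm.enorm
            · congr 1
              refine lintegral_congr fun y => ?_
              rw [ENNReal.mul_rpow_of_nonneg _ _ (by norm_num : (0:ℝ) ≤ 2), hsq]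
    calc (‖∫ y, W (x - y) * g y‖₊ : ENNReal) ^ (2:ℝ)
        ≤ (I1 ^ (1/(2:ℝ)) * (J x) ^ (1/(2:ℝ))) ^ (2:ℝ) :=
          ENNReal.rpow_le_rpow hb (by norm_num)
      _ = I1 * J x := by
          rw [ENNReal.mul_rpow_of_nonneg _ _ (by norm_num : (0:ℝ) ≤ 2), hsq, hsq]
  have step2 : ∫⁻ x, J x = I1 * E2 := by
    have hswap : ∫⁻ x, J x
        = ∫⁻ y, ∫⁻ x, (‖W (x - y)‖₊ : ENNReal) * (‖g y‖₊ : ENNReal) ^ (2:ℝ) := by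
      refine lintegral_lintegral_swap ?_
      exact ((hWm.comp (measurable_fst.sub measurable_snd)).enorm.mul
        ((hg.comp measurable_snd).enorm.pow_const _)).aemeasurable
    rw [hswap]
    have : ∀ y : ℝ, ∫⁻ x, (‖W (x - y)‖₊ : ENNReal) * (‖g y‖₊ : ENNReal) ^ (2:ℝ)
        = I1 * (‖g y‖₊ : ENNReal) ^ (2:ℝ) := by
      intro y
      rw [lintegral_mul_const (f := fun x => (‖W (x - y)‖₊ : ENNReal)) _
        ((hWm.comp (measurable_sub_const y)).enorm)]
      congr 1
      exact lintegral_sub_right_eq_self (fun z => (‖W z‖₊ : ENNReal)) y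
    simp_rw [this]
    rw [lintegral_const_mul _ (hg.nnnorm.coe_nnreal_ennreal.pow_const _)]
  rw [eLpNorm_eq_lintegral_rpow_enorm_toReal two_ne_zero ENNReal.ofNat_ne_top,
    eLpNorm_one_eq_lintegral_enorm,
    eLpNorm_eq_lintegral_rpow_enorm_toReal two_ne_zero ENNReal.ofNat_ne_top]
  have hle : ∫⁻ x, (‖∫ y, W (x - y) * g y‖₊ : ENNReal) ^ ((2:ENNReal).toReal)
      ≤ I1 * (I1 * E2) := by
    simp only [ENNReal.toReal_ofNat]
    calc ∫⁻ x, (‖∫ y, W (x - y) * g y‖₊ : ENNReal) ^ (2:ℝ)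
        ≤ ∫⁻ x, I1 * J x := lintegral_mono step1
      _ = I1 * ∫⁻ x, J x := by
          rw [lintegral_const_mul _ (Measurable.lintegral_prod_right
            (((hWm.comp (measurable_fst.sub measurable_snd)).enorm.mul
              ((hg.comp measurable_snd).enorm.pow_const _))))]
      _ = I1 * (I1 * E2) := by rw [step2]
  calc (∫⁻ x, (‖∫ y, W (x - y) * g y‖₊ : ENNReal) ^ ((2:ENNReal).toReal))
        ^ (1/(2:ENNReal).toReal)
      ≤ (I1 * (I1 * E2)) ^ (1/(2:ENNReal).toReal) :=
        ENNReal.rpow_le_rpow hle (by norm_num)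
    _ = I1 * E2 ^ (1/(2:ENNReal).toReal) := by
        simp only [ENNReal.toReal_ofNat, ← mul_assoc]
        rw [ENNReal.mul_rpow_of_nonneg _ _ (by norm_num : (0:ℝ) ≤ 1/2), hsqrt]

lemma stmt7_mvt_bound {S : ℝ → ℝ} (hS : Differentiable ℝ S) {M : ℝ}
    (hM : ∀ x, |deriv S x| ≤ M) (a b : ℝ) : |S b - S a| ≤ M * |b - a| := by
  have := Convex.norm_image_sub_le_of_norm_hasDerivWithin_le
    (f := S) (f' := deriv S) (s := Set.univ) (C := M)
    (fun t _ => (hS t).hasDerivAt.hasDerivWithinAt)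
    (fun t _ => (Real.norm_eq_abs _).trans_le (hM t)) convex_univ
    (Set.mem_univ a) (Set.mem_univ b)
  simpa [Real.norm_eq_abs] using this

lemma stmt7_taylor_bound {S : ℝ → ℝ} (hS : ContDiff ℝ 2 S) {M : ℝ}
    (hM : ∀ x, |iteratedDeriv 2 S x| ≤ M) (a c : ℝ) :
    |S (a + c) - S a - deriv S a * c| ≤ M * (|c| * |c|) := by
  have hdS : Differentiable ℝ (deriv S) := by
    have hS' : ContDiff ℝ (1+1) S := by rw [one_add_one_eq_two]; exact hS
    exact (contDiff_succ_iff_deriv.1 hS').2.2.differentiable one_ne_zero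
  have hS1 : Differentiable ℝ S := hS.differentiable two_ne_zero
  have hM' : ∀ x, |deriv (deriv S) x| ≤ M := by
    intro x
    have : iteratedDeriv 2 S x = deriv (deriv S) x := by
      rw [iteratedDeriv_succ, iteratedDeriv_one]
    rw [← this]; exact hM x
  set g : ℝ → ℝ := fun t => S t - deriv S a * t with hg
  have hg' : ∀ t, HasDerivAt g (deriv S t - deriv S a) t := fun t =>
    ((hS1 t).hasDerivAt).sub (by simpa using (hasDerivAt_id t).const_mul (deriv S a))
  have key := Convex.norm_image_sub_le_of_norm_hasDerivWithin_le
    (f := g) (f' := fun t => deriv S t - deriv S a)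
    (s := Metric.closedBall a |c|) (C := M * |c|)
    (fun t _ => (hg' t).hasDerivWithinAt)
    (fun t ht => by
      have h1 : |deriv S t - deriv S a| ≤ M * |t - a| := by
        simpa [Real.norm_eq_abs] using stmt7_mvt_bound hdS hM' a t
      have h2 : |t - a| ≤ |c| := by
        simpa [Real.dist_eq] using Metric.mem_closedBall.1 ht
      have hM0 : 0 ≤ M := (abs_nonneg _).trans (hM 0)
      calc ‖deriv S t - deriv S a‖ = |deriv S t - deriv S a| := Real.norm_eq_abs _
        _ ≤ M * |t - a| := h1
        _ ≤ M * |c| := by nlinarith)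
    (convex_closedBall a |c|)
    (Metric.mem_closedBall_self (abs_nonneg c))
    (show a + c ∈ Metric.closedBall a |c| by
      simp [Metric.mem_closedBall, Real.dist_eq])
  have : g (a + c) - g a = S (a + c) - S a - deriv S a * c := by simp [hg]; ring
  calc |S (a + c) - S a - deriv S a * c| = |g (a + c) - g a| := by rw [this]
    _ ≤ M * |c| * |a + c - a| := by simpa [Real.norm_eq_abs] using key
    _ = M * (|c| * |c|) := by rw [add_sub_cancel_left]; ring

lemma stmt7_W_L2 {W W' : ℝ → ℝ} (hW : Integrable W (volume : Measure ℝ))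
    (hW' : Integrable W' (volume : Measure ℝ)) (hWd : ∀ x, HasDerivAt W (W' x) x) :
    eLpNorm W 2 volume ≤ eLpNorm W 1 volume + eLpNorm W' 1 volume := by
  have hpow2 : ∀ a : ENNReal, a ^ (2:ℝ) = a * a := fun a => by
    rw [show ((2:ℝ) = ((2:ℕ):ℝ)) by norm_num, ENNReal.rpow_natCast]; ring
  have hsqrt : ∀ a : ENNReal, (a * a) ^ ((1:ℝ)/2) = a := fun a => by
    rw [← sq, ← ENNReal.rpow_natCast a 2, ← ENNReal.rpow_mul]; norm_num
  have hWc : Continuous W := continuous_iff_continuousAt.2 fun x => (hWd x).continuousAt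
  set I1 := eLpNorm W 1 volume with hI1
  set I1' := eLpNorm W' 1 volume with hI1'
  have hbd : ∀ x, (‖W x‖₊ : ENNReal) ≤ I1' := by
    intro x
    rw [hI1', eLpNorm_one_eq_lintegral_enorm, ← enorm_eq_nnnorm, ← ofReal_norm]
    calc ENNReal.ofReal ‖W x‖ ≤ ENNReal.ofReal (∫ y, |W' y|) :=
          ENNReal.ofReal_le_ofReal ((Real.norm_eq_abs _).trans_le (stmt7_supW hW hW' hWd x))
      _ = ∫⁻ y, (‖W' y‖₊ : ENNReal) := by
          simp only [← enorm_eq_nnnorm]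
          rw [← ofReal_integral_norm_eq_lintegral_enorm hW']
          simp [Real.norm_eq_abs]
  rw [eLpNorm_eq_lintegral_rpow_enorm_toReal two_ne_zero ENNReal.ofNat_ne_top]
  have hle : ∫⁻ x, (‖W x‖₊ : ENNReal) ^ ((2:ENNReal).toReal)
      ≤ (I1 + I1') * (I1 + I1') := by
    simp only [ENNReal.toReal_ofNat]
    calc ∫⁻ x, (‖W x‖₊ : ENNReal) ^ (2:ℝ)
        ≤ ∫⁻ x, I1' * (‖W x‖₊ : ENNReal) := by
          refine lintegral_mono fun x => ?_
          rw [hpow2]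
          exact mul_le_mul_left (hbd x) _
      _ = I1' * I1 := by
          simp only [← enorm_eq_nnnorm]
          rw [lintegral_const_mul _ hWc.measurable.enorm, hI1,
            eLpNorm_one_eq_lintegral_enorm]
      _ ≤ (I1 + I1') * (I1 + I1') := by
          exact mul_le_mul' le_add_self le_self_add
  calc (∫⁻ x, (‖W x‖₊ : ENNReal) ^ ((2:ENNReal).toReal)) ^ (1/(2:ENNReal).toReal)
      ≤ ((I1 + I1') * (I1 + I1')) ^ (1/(2:ENNReal).toReal) :=
        ENNReal.rpow_le_rpow hle (by norm_num)
    _ = I1 + I1' := by simp only [ENNReal.toReal_ofNat]; exact hsqrt _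

lemma stmt7_integ_mul {W g : ℝ → ℝ} (hW2 : MemLp W 2 (volume : Measure ℝ))
    (hg : MemLp g 2 (volume : Measure ℝ)) (x : ℝ) :
    Integrable (fun y => W (x - y) * g y) (volume : Measure ℝ) := by
  have hWx : MemLp (fun y => W (x - y)) 2 (volume : Measure ℝ) :=
    hW2.comp_measurePreserving (Measure.measurePreserving_sub_left volume x)
  have := hg.smul (φ := fun y => W (x - y)) hWx
    (r := 1)
  rw [← memLp_one_iff_integrable]
  exact this

end Aux

/-- Fréchet differentiability of `F̃(v) = S(W ⋆ (v̄+v)) − S(W ⋆ v̄)` on `L²(ℝ)`: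
`F̃` maps `L²` to `L²`, the candidate derivative at `v` in direction `h` is
`S'(W ⋆ (v̄+v)) ⬝ (W ⋆ h)`, and the Taylor remainder satisfies
`‖F̃(v+h) − F̃(v) − dF̃(v)h‖₂ ≤ (C/2) ‖S''‖_∞ ‖W‖²_{W^{1,1}} ‖h‖₂²`, where `C`
depends only on the Banach algebra constant of `H¹(ℝ)`. -/
theorem stmt7 (S : ℝ → ℝ) (hS : ContDiff ℝ 2 S)
    (MS1 MS2 : ℝ) (hMS1 : ∀ x, |deriv S x| ≤ MS1) (hMS2 : ∀ x, |iteratedDeriv 2 S x| ≤ MS2)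
    (W W' : ℝ → ℝ) (hW : Integrable W (volume : Measure ℝ))
    (hW' : Integrable W' (volume : Measure ℝ))
    (hWd : ∀ x, HasDerivAt W (W' x) x)
    (vbar : ℝ → ℝ) (hvm : Measurable vbar)
    (hvbar : ∀ᵐ x ∂(volume : Measure ℝ), Integrable (fun y => W (x - y) * vbar y)) :
    (∀ v : ℝ → ℝ, MemLp v 2 (volume : Measure ℝ) →
      MemLp (fun x => S (∫ y, W (x - y) * (vbar y + v y)) - S (∫ y, W (x - y) * vbar y))
        2 (volume : Measure ℝ)) ∧
    ∃ C > (0:ℝ), ∀ v h : ℝ → ℝ,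
      MemLp v 2 (volume : Measure ℝ) → MemLp h 2 (volume : Measure ℝ) →
      eLpNorm (fun x =>
            S (∫ y, W (x - y) * (vbar y + (v y + h y)))
            - S (∫ y, W (x - y) * (vbar y + v y))
            - deriv S (∫ y, W (x - y) * (vbar y + v y)) * (∫ y, W (x - y) * h y))
          2 volume
        ≤ ENNReal.ofReal (C / 2 * MS2)
            * (eLpNorm W 1 volume + eLpNorm W' 1 volume) ^ 2
            * (eLpNorm h 2 volume) ^ 2 := by
  have hWc : Continuous W := continuous_iff_continuousAt.2 fun x => (hWd x).continuousAt
  set N := eLpNorm W 1 volume + eLpNorm W' 1 volume with hN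
  have hI1fin : eLpNorm W 1 volume ≠ ⊤ := by
    rw [eLpNorm_one_eq_lintegral_enorm]; exact hW.hasFiniteIntegral.ne
  have hI1'fin : eLpNorm W' 1 volume ≠ ⊤ := by
    rw [eLpNorm_one_eq_lintegral_enorm]; exact hW'.hasFiniteIntegral.ne
  have hNfin : N ≠ ⊤ := by rw [hN]; exact ENNReal.add_ne_top.2 ⟨hI1fin, hI1'fin⟩
  have hW2le : eLpNorm W 2 volume ≤ N := stmt7_W_L2 hW hW' hWd
  have hW2 : MemLp W 2 (volume : Measure ℝ) :=
    ⟨hWc.aestronglyMeasurable, lt_of_le_of_lt hW2le (lt_top_iff_ne_top.2 hNfin)⟩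
  constructor
  · -- Part 1
    intro v hv
    obtain ⟨v', hv'm, hv'e⟩ : ∃ v', StronglyMeasurable v' ∧ v =ᵐ[volume] v' :=
      ⟨hv.1.mk v, hv.1.stronglyMeasurable_mk, hv.1.ae_eq_mk⟩
    have hv' : MemLp v' 2 (volume : Measure ℝ) := hv.ae_eq hv'e
    have hvm' : Measurable v' := hv'm.measurable
    have hEq : ∀ x : ℝ, (∫ y, W (x - y) * (vbar y + v y))
        = ∫ y, W (x - y) * (vbar y + v' y) := fun x =>
      integral_congr_ae (hv'e.mono fun y hy => by dsimp only; rw [hy])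
    set G : ℝ → ℝ := fun x => ∫ y, W (x - y) * v' y with hG
    have hGmem : MemLp G 2 (volume : Measure ℝ) :=
      ⟨(stmt7_conv_sm hWc hvm').aestronglyMeasurable,
        lt_of_le_of_lt (stmt7_conv_young hWc hvm')
          (ENNReal.mul_lt_top (lt_top_iff_ne_top.2 hI1fin) hv'.2)⟩
    refine MemLp.of_le_mul (c := MS1) hGmem ?_ ?_
    · have hfe : (fun x => S (∫ y, W (x - y) * (vbar y + v y)) - S (∫ y, W (x - y) * vbar y))
          = fun x => S (∫ y, W (x - y) * (vbar y + v' y)) - S (∫ y, W (x - y) * vbar y) :=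
        funext fun x => by rw [hEq]
      rw [hfe]
      exact ((hS.continuous.comp_stronglyMeasurable
          (stmt7_conv_sm hWc (hvm.add hvm'))).sub
        (hS.continuous.comp_stronglyMeasurable (stmt7_conv_sm hWc hvm))).aestronglyMeasurable
    · filter_upwards [hvbar] with x hx
      have hint2 : Integrable (fun y => W (x - y) * v' y) volume := stmt7_integ_mul hW2 hv' x
      have hsplit : (∫ y, W (x - y) * (vbar y + v y))
          = (∫ y, W (x - y) * vbar y) + G x := by
        rw [hEq x]
        have h1 : (fun y => W (x - y) * (vbar y + v' y))
            = fun y => W (x - y) * vbar y + W (x - y) * v' y := funext fun y => by ring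
        rw [h1, integral_add hx hint2]
      rw [Real.norm_eq_abs, Real.norm_eq_abs, hsplit]
      have := stmt7_mvt_bound (hS.differentiable two_ne_zero) hMS1
        (∫ y, W (x - y) * vbar y) ((∫ y, W (x - y) * vbar y) + G x)
      simpa [add_sub_cancel_left] using this
  · -- Part 2
    refine ⟨2, by norm_num, fun v h hv hh => ?_⟩
    have hMS2_0 : 0 ≤ MS2 := (abs_nonneg _).trans (hMS2 0)
    obtain ⟨v', hv'm, hv'e⟩ : ∃ v', StronglyMeasurable v' ∧ v =ᵐ[volume] v' :=
      ⟨hv.1.mk v, hv.1.stronglyMeasurable_mk, hv.1.ae_eq_mk⟩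
    obtain ⟨h', hh'm, hh'e⟩ : ∃ h', StronglyMeasurable h' ∧ h =ᵐ[volume] h' :=
      ⟨hh.1.mk h, hh.1.stronglyMeasurable_mk, hh.1.ae_eq_mk⟩
    have hv' : MemLp v' 2 (volume : Measure ℝ) := hv.ae_eq hv'e
    have hh' : MemLp h' 2 (volume : Measure ℝ) := hh.ae_eq hh'e
    have hvm' : Measurable v' := hv'm.measurable
    have hhm' : Measurable h' := hh'm.measurable
    have hEqv : ∀ x : ℝ, (∫ y, W (x - y) * (vbar y + v y))
        = ∫ y, W (x - y) * (vbar y + v' y) := fun x =>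
      integral_congr_ae (hv'e.mono fun y hy => by dsimp only; rw [hy])
    have hEqvh : ∀ x : ℝ, (∫ y, W (x - y) * (vbar y + (v y + h y)))
        = ∫ y, W (x - y) * (vbar y + (v' y + h' y)) := fun x =>
      integral_congr_ae ((hv'e.and hh'e).mono fun y hy => by dsimp only; rw [hy.1, hy.2])
    have hEqh : ∀ x : ℝ, (∫ y, W (x - y) * h y) = ∫ y, W (x - y) * h' y := fun x =>
      integral_congr_ae (hh'e.mono fun y hy => by dsimp only; rw [hy])
    set A : ℝ → ℝ := fun x => ∫ y, W (x - y) * vbar y with hA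
    set Gv : ℝ → ℝ := fun x => ∫ y, W (x - y) * v' y with hGv
    set Gh : ℝ → ℝ := fun x => ∫ y, W (x - y) * h' y with hGh
    set K := eLpNorm W 2 volume with hK
    set H := eLpNorm h' 2 volume with hH
    have hHfin : H ≠ ⊤ := hh'.2.ne
    have hKfin : K ≠ ⊤ := hW2.2.ne
    have hKH_fin : K * H ≠ ⊤ := ENNReal.mul_ne_top hKfin hHfin
    have hptGh : ∀ x, |Gh x| ≤ (K * H).toReal := by
      intro x
      have := stmt7_conv_ptwise hWc hhm' x
      have h2 : ((‖Gh x‖₊ : ENNReal)).toReal ≤ (K * H).toReal :=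
        ENNReal.toReal_mono hKH_fin this
      simpa [Real.norm_eq_abs] using h2
    -- rewrite target function with measurable representatives
    have hfe : (fun x =>
            S (∫ y, W (x - y) * (vbar y + (v y + h y)))
            - S (∫ y, W (x - y) * (vbar y + v y))
            - deriv S (∫ y, W (x - y) * (vbar y + v y)) * (∫ y, W (x - y) * h y))
        = fun x =>
            S (∫ y, W (x - y) * (vbar y + (v' y + h' y)))
            - S (∫ y, W (x - y) * (vbar y + v' y))
            - deriv S (∫ y, W (x - y) * (vbar y + v' y)) * Gh x :=
      funext fun x => by rw [hEqv, hEqvh, hEqh]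
    rw [hfe]
    -- a.e. pointwise Taylor bound
    set creal : ℝ := MS2 * (K * H).toReal with hcreal
    have hcreal0 : 0 ≤ creal := mul_nonneg hMS2_0 ENNReal.toReal_nonneg
    have hbound : ∀ᵐ x ∂(volume : Measure ℝ),
        ‖S (∫ y, W (x - y) * (vbar y + (v' y + h' y)))
            - S (∫ y, W (x - y) * (vbar y + v' y))
            - deriv S (∫ y, W (x - y) * (vbar y + v' y)) * Gh x‖₊
          ≤ creal.toNNReal * ‖Gh x‖₊ := by
      filter_upwards [hvbar] with x hx
      have hintv : Integrable (fun y => W (x - y) * v' y) volume := stmt7_integ_mul hW2 hv' x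
      have hinth : Integrable (fun y => W (x - y) * h' y) volume := stmt7_integ_mul hW2 hh' x
      have hsplit1 : (∫ y, W (x - y) * (vbar y + v' y)) = A x + Gv x := by
        have h1 : (fun y => W (x - y) * (vbar y + v' y))
            = fun y => W (x - y) * vbar y + W (x - y) * v' y := funext fun y => by ring
        rw [h1, integral_add hx hintv]
      have hxv : Integrable (fun y => W (x - y) * (vbar y + v' y)) volume := by
        have h1 : (fun y => W (x - y) * (vbar y + v' y))
            = fun y => W (x - y) * vbar y + W (x - y) * v' y := funext fun y => by ring
        rw [h1]; exact hx.add hintv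
      have hsplit2 : (∫ y, W (x - y) * (vbar y + (v' y + h' y)))
          = (A x + Gv x) + Gh x := by
        have h1 : (fun y => W (x - y) * (vbar y + (v' y + h' y)))
            = fun y => W (x - y) * (vbar y + v' y) + W (x - y) * h' y :=
          funext fun y => by ring
        rw [h1, integral_add hxv hinth, hsplit1]
      rw [hsplit1, hsplit2]
      rw [← NNReal.coe_le_coe]
      push_cast
      rw [Real.coe_toNNReal creal hcreal0]
      simp only [Real.norm_eq_abs]
      calc |S (A x + Gv x + Gh x) - S (A x + Gv x) - deriv S (A x + Gv x) * Gh x|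
          ≤ MS2 * (|Gh x| * |Gh x|) := by
            have := stmt7_taylor_bound hS hMS2 (A x + Gv x) (Gh x)
            simpa using this
        _ ≤ creal * |Gh x| := by
            have := hptGh x
            have h0 : (0:ℝ) ≤ |Gh x| := abs_nonneg _
            rw [hcreal]
            nlinarith [mul_nonneg hMS2_0 (mul_nonneg (sub_nonneg.2 this) h0)]
    have hmain := eLpNorm_le_nnreal_smul_eLpNorm_of_ae_le_mul hbound 2
    have hGh_young : eLpNorm Gh 2 volume ≤ eLpNorm W 1 volume * H :=
      stmt7_conv_young hWc hhm'
    have hcoe : ((creal.toNNReal : NNReal) : ENNReal) = ENNReal.ofReal MS2 * (K * H) := by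
      show ENNReal.ofReal creal = _
      rw [hcreal, ENNReal.ofReal_mul hMS2_0, ENNReal.ofReal_toReal hKH_fin]
    calc eLpNorm (fun x =>
            S (∫ y, W (x - y) * (vbar y + (v' y + h' y)))
            - S (∫ y, W (x - y) * (vbar y + v' y))
            - deriv S (∫ y, W (x - y) * (vbar y + v' y)) * Gh x) 2 volume
        ≤ creal.toNNReal • eLpNorm Gh 2 volume := hmain
      _ = ((creal.toNNReal : NNReal) : ENNReal) * eLpNorm Gh 2 volume := by
          rw [ENNReal.smul_def, smul_eq_mul]
      _ ≤ (ENNReal.ofReal MS2 * (K * H)) * (eLpNorm W 1 volume * H) := by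
          rw [hcoe]; exact mul_le_mul_right hGh_young _
      _ = ENNReal.ofReal MS2 * (K * eLpNorm W 1 volume) * (H * H) := by ring
      _ ≤ ENNReal.ofReal MS2 * (N * N) * (H * H) := by
          refine mul_le_mul_left (mul_le_mul_right ?_ _) _
          rw [hN]
          exact mul_le_mul' hW2le le_self_add
      _ = ENNReal.ofReal ((2:ℝ) / 2 * MS2) * N ^ 2 * H ^ 2 := by
          rw [show (2:ℝ)/2 * MS2 = MS2 by norm_num, sq, sq]
      _ = ENNReal.ofReal ((2:ℝ) / 2 * MS2) * N ^ 2 * (eLpNorm h 2 volume) ^ 2 := by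
          rw [hH, ← eLpNorm_congr_ae hh'e]
end

section
/- Let A be a closed operator on a Hilbert space, ψ, φ nonzero vectors with ⟨ψ, φ⟩ ≠ 0, φ ∈ ker A, and let P v = v − (⟨v, ψ⟩/⟨φ, ψ⟩) φ be the projection onto ψ^⊥ along φ. Then for every z in the resolvent set of A with z ≠ 0, z belongs to the resolvent set of PA restricted to the range of P, with inverse given explicitly by (zI − PA)⁻¹ P r = Q_z R(z,A) P r, where Q_z v = v − z (⟨v, ψ⟩/⟨φ, ψ⟩) R(z,A) φ and R(z,A) = (zI−A)⁻¹. In particular ρ(A) \ {0} ⊆ ρ(PA|_{ran P}) \ {0}. -/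
open scoped ComplexInnerProductSpace

/-- Bordered resolvent lemma: let `A` be an operator on a complex Hilbert space with
`Aφ = 0`, `⟨ψ, φ⟩ ≠ 0`, `P v = v − (⟨ψ,v⟩/⟨ψ,φ⟩) φ` the projection onto `ψ^⊥` along
`φ`, and `z ≠ 0` in the resolvent set of `A` with resolvent `R(z,A)`. Then `z` is in
the resolvent set of `PA` restricted to `ran P`: with
`Q_z v = v − z(⟨ψ,v⟩/⟨ψ,φ⟩) R(z,A)φ`, the vector `w = Q_z R(z,A) P r` solves
`(z − PA) w = P r` in `ran P`, and `z − PA` is injective on `ran P`. -/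
theorem stmt13 {H : Type*} [NormedAddCommGroup H] [InnerProductSpace ℂ H]
    [CompleteSpace H]
    (A : H →ₗ[ℂ] H) (φ ψ : H) (hφ : φ ≠ 0) (hψφ : ⟪ψ, φ⟫ ≠ 0) (hAφ : A φ = 0)
    (z : ℂ) (hz : z ≠ 0) (Rz : H →L[ℂ] H)
    (hRz₁ : ∀ v, Rz (z • v - A v) = v) (hRz₂ : ∀ v, z • Rz v - A (Rz v) = v) :
    let P : H → H := fun v => v - (⟪ψ, v⟫ / ⟪ψ, φ⟫) • φ
    let Q : H → H := fun v => v - (z * ⟪ψ, v⟫ / ⟪ψ, φ⟫) • Rz φ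
    (∀ r : H,
      z • Q (Rz (P r)) - P (A (Q (Rz (P r)))) = P r ∧ ⟪ψ, Q (Rz (P r))⟫ = 0) ∧
    (∀ w : H, ⟪ψ, w⟫ = 0 → z • w - P (A w) = 0 → w = 0) := by
  intro P Q
  -- Since Aφ = 0, the resolvent acts on φ as multiplication by z⁻¹.
  have h := hRz₁ φ
  rw [hAφ, sub_zero, map_smul] at h
  have hRzφ : Rz φ = z⁻¹ • φ := by
    calc Rz φ = z⁻¹ • (z • Rz φ) := by
          rw [smul_smul, inv_mul_cancel₀ hz, one_smul]
      _ = z⁻¹ • φ := by rw [h]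
  -- Hence Q coincides with P.
  have hQP : ∀ v, Q v = P v := by
    intro v
    have hc : ∀ a : ℂ, z * a / ⟪ψ, φ⟫ * z⁻¹ = a / ⟪ψ, φ⟫ := by
      intro a; field_simp
    simp only [Q, P, hRzφ, smul_smul, hc]
  have hPψ : ∀ v, ⟪ψ, P v⟫ = 0 := by
    intro v
    simp only [P, inner_sub_right, inner_smul_right]
    field_simp
    simp
  constructor
  · intro r
    set u := Rz (P r) with hu
    have hAu : A u = z • u - P r := by
      have h2 := hRz₂ (P r)
      rw [← hu] at h2
      rw [← h2]; abel
    have hAPu : A (P u) = A u := by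
      simp only [P, map_sub, map_smul, hAφ, smul_zero, sub_zero]
    refine ⟨?_, by rw [hQP]; exact hPψ u⟩
    rw [hQP, hAPu]
    have hiAu : ⟪ψ, A u⟫ = z * ⟪ψ, u⟫ := by
      rw [hAu, inner_sub_right, inner_smul_right, hPψ, sub_zero]
    have hPAu : P (A u) = z • u - P r - ((z * ⟪ψ, u⟫) / ⟪ψ, φ⟫) • φ := by
      show A u - (⟪ψ, A u⟫ / ⟪ψ, φ⟫) • φ = _
      rw [hiAu, hAu]
    have hPu : P u = u - (⟪ψ, u⟫ / ⟪ψ, φ⟫) • φ := rfl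
    rw [hPu, hPAu]
    module
  · intro w hw h0
    have hd : z • w - A w = -((⟪ψ, A w⟫ / ⟪ψ, φ⟫) • φ) := by
      simp only [P] at h0
      rw [← sub_eq_zero, ← h0]; abel
    have h1 := hRz₁ w
    rw [hd, map_neg, map_smul, hRzφ, smul_smul] at h1
    have hw1 : w = -((⟪ψ, A w⟫ / ⟪ψ, φ⟫ * z⁻¹) • φ) := h1.symm
    have h2 := congrArg (fun v => (⟪ψ, v⟫ : ℂ)) hw1
    simp only [inner_neg_right, inner_smul_right, hw] at h2
    have h3 : ⟪ψ, A w⟫ / ⟪ψ, φ⟫ * z⁻¹ = 0 := by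
      rcases mul_eq_zero.mp (neg_eq_zero.mp h2.symm) with h4 | h4
      · exact h4
      · exact absurd h4 hψφ
    rw [hw1, h3, zero_smul, neg_zero]
end
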